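/- There exists a 2-degenerate 3-computad B such that the endofunctor (− × B) on the category of 2-degenerate 3-computads does not preserve coequalizers; consequently (− × B) has no right adjoint and the category of 2-degenerate 3-computads is not cartesian closed. -/

import Mathlib

open CategoryTheory

/-- A 2-degenerate 3-computad: a single 0-cell, no 1-cells, so the data is a set of
2-cells, a set of 3-cells, and boundary maps into the free commutative monoid
(multisets) on the 2-cells. -/
structure DegComputad where
  C2 : Type
  C3 : Type
  src : C3 → Multiset C2
  tgt : C3 → Multiset C2

/-- Morphisms of 2-degenerate 3-computads. -/
@[ext]
structure DegComputad.Hom (A B : DegComputad) where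
  f2 : A.C2 → B.C2
  f3 : A.C3 → B.C3
  src_comm : ∀ e, B.src (f3 e) = Multiset.map f2 (A.src e)
  tgt_comm : ∀ e, B.tgt (f3 e) = Multiset.map f2 (A.tgt e)

instance : Category DegComputad where
  Hom := DegComputad.Hom
  id A := ⟨id, id, by simp, by simp⟩
  comp f g := ⟨g.f2 ∘ f.f2, g.f3 ∘ f.f3,
    by intro e; simp [f.src_comm, g.src_comm, Multiset.map_map],
    by intro e; simp [f.tgt_comm, g.tgt_comm, Multiset.map_map]⟩

@[simp] lemma DegComputad.id_f2 (A : DegComputad) : (𝟙 A : A ⟶ A).f2 = id := rfl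
@[simp] lemma DegComputad.id_f3 (A : DegComputad) : (𝟙 A : A ⟶ A).f3 = id := rfl
@[simp] lemma DegComputad.comp_f2 {A B C : DegComputad} (f : A ⟶ B) (g : B ⟶ C) :
    (f ≫ g).f2 = g.f2 ∘ f.f2 := rfl
@[simp] lemma DegComputad.comp_f3 {A B C : DegComputad} (f : A ⟶ B) (g : B ⟶ C) :
    (f ≫ g).f3 = g.f3 ∘ f.f3 := rfl

open CategoryTheory.Limits

namespace Stmt9Aux

/-- The walking 3-cell `g : b₁·b₂ → b₃`; this is the computad `B`. -/
abbrev W : DegComputad := ⟨Fin 3, Unit, fun _ => {0, 1}, fun _ => {2}⟩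

/-- One 2-cell, no 3-cells. -/
abbrev Xp : DegComputad := ⟨Unit, Empty, fun e => e.elim, fun e => e.elim⟩

/-- The coequalizer: 3-cell with source `x·x`, target `y`. -/
abbrev Qc : DegComputad := ⟨Fin 2, Unit, fun _ => {0, 0}, fun _ => {1}⟩

def fm : Xp ⟶ W := ⟨fun _ => 0, fun e => e.elim, fun e => e.elim, fun e => e.elim⟩
def gm : Xp ⟶ W := ⟨fun _ => 1, fun e => e.elim, fun e => e.elim, fun e => e.elim⟩
def pim : W ⟶ Qc := ⟨![0, 0, 1], id, by decide, by decide⟩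
def sig : W ⟶ W := ⟨![1, 0, 2], id, by decide, by decide⟩

lemma coeq_cond : fm ≫ pim = gm ≫ pim := by
  apply DegComputad.Hom.ext
  · funext u; rfl
  · funext e; exact e.elim

lemma aux_fin3 : ∀ a b : Fin 3, ({a, b} : Multiset (Fin 3)) = {0, 1} →
    (a = 0 ∧ b = 1) ∨ (a = 1 ∧ b = 0) := by decide

lemma aux_fin2 : ∀ a b : Fin 2, ({a, b} : Multiset (Fin 2)) = {0, 0} →
    a = 0 ∧ b = 0 := by decide

lemma homWW (v : W ⟶ W) : v = 𝟙 W ∨ v = sig := by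
  have hs := v.src_comm ()
  have ht := v.tgt_comm ()
  simp only [W, Multiset.insert_eq_cons, Multiset.map_cons, Multiset.map_singleton] at hs ht
  have ht2 : v.f2 2 = 2 := by
    have := Multiset.singleton_inj.mp ht.symm
    exact this
  rcases aux_fin3 _ _ hs.symm with ⟨h0, h1⟩ | ⟨h0, h1⟩
  · left
    apply DegComputad.Hom.ext
    · funext c; fin_cases c <;> simp [h0, h1, ht2]
    · funext x; exact Subsingleton.elim _ _
  · right
    apply DegComputad.Hom.ext
    · funext c; fin_cases c <;> simp [sig, h0, h1, ht2]
    · funext x; exact Subsingleton.elim _ _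

lemma homWQ (v v' : W ⟶ Qc) : v = v' := by
  have key : ∀ w : W ⟶ Qc, ∀ c : Fin 3, w.f2 c = ![0, 0, 1] c := by
    intro w c
    have hs := w.src_comm ()
    have ht := w.tgt_comm ()
    simp only [W, Qc, Multiset.insert_eq_cons, Multiset.map_cons, Multiset.map_singleton] at hs ht
    obtain ⟨h0, h1⟩ := aux_fin2 _ _ hs.symm
    have ht2 : w.f2 2 = 1 := Multiset.singleton_inj.mp ht.symm
    fin_cases c <;> simp [h0, h1, ht2]
  apply DegComputad.Hom.ext
  · funext c; rw [key v c, key v' c]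
  · funext x; exact Subsingleton.elim _ _

lemma sig_sig : sig ≫ sig = 𝟙 W := by
  apply DegComputad.Hom.ext
  · funext c; fin_cases c <;> rfl
  · funext x; exact Subsingleton.elim _ _

/-- A 3-cell with enumerated boundary gives a morphism from the walking cell `W`. -/
def mkCell {A : DegComputad} (e : A.C3) (c0 c1 t : A.C2)
    (hs : A.src e = {c0, c1}) (ht : A.tgt e = {t}) : W ⟶ A where
  f2 := ![c0, c1, t]
  f3 := fun _ => e
  src_comm := by
    intro x
    rw [hs]
    show ({c0, c1} : Multiset A.C2) = Multiset.map ![c0, c1, t] {0, 1}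
    simp [Multiset.insert_eq_cons]
  tgt_comm := by
    intro x
    rw [ht]
    show ({t} : Multiset A.C2) = Multiset.map ![c0, c1, t] {2}
    simp

/-- If `A` is a product of `Qc` and `W`, then `A` has at most one 3-cell. -/
lemma C3_sub {A : DegComputad} (pA : A ⟶ Qc) (qA : A ⟶ W)
    (h : IsLimit (BinaryFan.mk pA qA)) (e e' : A.C3) : e = e' := by
  have decomp : ∀ d : A.C3, ∃ c0 c1 t : A.C2, A.src d = {c0, c1} ∧ A.tgt d = {t} := by
    intro d
    have hcs : Multiset.card (A.src d) = 2 := by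
      have hsc := pA.src_comm d
      have : Multiset.card (Multiset.map pA.f2 (A.src d)) = 2 := by
        rw [← hsc]; rfl
      simpa using this
    have hct : Multiset.card (A.tgt d) = 1 := by
      have htc := pA.tgt_comm d
      have : Multiset.card (Multiset.map pA.f2 (A.tgt d)) = 1 := by
        rw [← htc]; rfl
      simpa using this
    obtain ⟨c0, c1, hcc⟩ := Multiset.card_eq_two.mp hcs
    obtain ⟨t, htt⟩ := Multiset.card_eq_one.mp hct
    exact ⟨c0, c1, t, hcc, htt⟩
  obtain ⟨c0, c1, t, hs, htg⟩ := decomp e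
  obtain ⟨c0', c1', t', hs', htg'⟩ := decomp e'
  set u : W ⟶ A := mkCell e c0 c1 t hs htg with hu
  set u' : W ⟶ A := mkCell e' c0' c1' t' hs' htg' with hu'
  have hpu : u ≫ pA = u' ≫ pA := homWQ _ _
  have hue : u.f3 () = e := rfl
  have hue' : u'.f3 () = e' := rfl
  have key : ∀ (a b : W ⟶ A), a ≫ pA = b ≫ pA → a ≫ qA = b ≫ qA → a.f3 () = b.f3 () := by
    intro a b h1 h2
    have : a = b := BinaryFan.IsLimit.hom_ext h h1 h2
    rw [this]
  rcases homWW (u ≫ qA) with h1 | h1 <;> rcases homWW (u' ≫ qA) with h2 | h2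
  · rw [← hue, ← hue']; exact key u u' hpu (h1.trans h2.symm)
  · -- u ≫ qA = 𝟙, u' ≫ qA = sig : then u' = sig ≫ u
    have : (sig ≫ u).f3 () = u'.f3 () := by
      apply key
      · exact homWQ _ _
      · rw [Category.assoc, h1, Category.comp_id, h2]
    rw [← hue, ← hue', ← this]; rfl
  · have : (sig ≫ u').f3 () = u.f3 () := by
      apply key
      · exact homWQ _ _
      · rw [Category.assoc, h2, Category.comp_id, h1]
    rw [← hue, ← hue', ← this]; rfl
  · rw [← hue, ← hue']; exact key u u' hpu (h1.trans h2.symm)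

/-- The canonical map of a cofork, retyped. -/
def sPi (s : Cofork fm gm) : W ⟶ s.pt := s.π

lemma sPi_key (s : Cofork fm gm) : (sPi s).f2 0 = (sPi s).f2 1 :=
  congrFun (congrArg DegComputad.Hom.f2 s.condition) ()

/-- The descent morphism out of the coequalizer `Qc`. -/
def descH (s : Cofork fm gm) : Qc ⟶ s.pt where
  f2 := ![(sPi s).f2 0, (sPi s).f2 2]
  f3 := (sPi s).f3
  src_comm := by
    intro e
    rw [(sPi s).src_comm e]
    show Multiset.map (sPi s).f2 {0, 1}
      = Multiset.map ![(sPi s).f2 0, (sPi s).f2 2] {0, 0}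
    simp [Multiset.insert_eq_cons, ← sPi_key s]
  tgt_comm := by
    intro e
    rw [(sPi s).tgt_comm e]
    show Multiset.map (sPi s).f2 {2}
      = Multiset.map ![(sPi s).f2 0, (sPi s).f2 2] {1}
    simp

lemma descH_fac (s : Cofork fm gm) : pim ≫ descH s = sPi s := by
  apply DegComputad.Hom.ext
  · funext c; fin_cases c
    · rfl
    · exact sPi_key s
    · rfl
  · funext e; rfl

lemma descH_uniq (s : Cofork fm gm) (m : Qc ⟶ s.pt) (hm : pim ≫ m = sPi s) :
    m = descH s := by
  apply DegComputad.Hom.ext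
  · funext c
    fin_cases c
    · exact congrFun (congrArg DegComputad.Hom.f2 hm) 0
    · exact congrFun (congrArg DegComputad.Hom.f2 hm) 2
  · funext e
    exact congrFun (congrArg DegComputad.Hom.f3 hm) e

/-- The coequalizer `pim` is a colimit cofork. -/
def coforkColim : IsColimit (Cofork.ofπ pim coeq_cond) :=
  Cofork.IsColimit.mk _ (fun s => descH s) (fun s => descH_fac s)
    (fun s m hm => descH_uniq s m hm)

section Master

variable (F : DegComputad ⥤ DegComputad)

/-- The relation on 2-cells generated by the parallel pair's images. -/
def r2 : (F.obj W).C2 → (F.obj W).C2 → Prop :=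
  fun a b => ∃ c, (F.map fm).f2 c = a ∧ (F.map gm).f2 c = b

/-- A concrete cocone apex: quotient on 2-cells, identity on 3-cells. -/
def Cq : DegComputad :=
  ⟨Quot (r2 F), (F.obj W).C3,
    fun e => ((F.obj W).src e).map (Quot.mk (r2 F)),
    fun e => ((F.obj W).tgt e).map (Quot.mk (r2 F))⟩

def h0 : F.obj W ⟶ Cq F :=
  ⟨Quot.mk (r2 F), id, fun _ => rfl, fun _ => rfl⟩

lemma h0_coeq (p : F ⟶ 𝟭 DegComputad) : F.map fm ≫ h0 F = F.map gm ≫ h0 F := by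
  apply DegComputad.Hom.ext
  · funext c; exact Quot.sound ⟨c, rfl, rfl⟩
  · funext e; exact ((p.app Xp).f3 e).elim

/-- The cocone on the image parallel pair with apex `Cq F`. -/
def cc (p : F ⟶ 𝟭 DegComputad) : Cocone (parallelPair fm gm ⋙ F) where
  pt := Cq F
  ι := {
    app := fun j => match j with
      | WalkingParallelPair.zero => F.map fm ≫ h0 F
      | WalkingParallelPair.one => h0 F
    naturality := by
      rintro _ _ (_ | _ | _) <;>
        simp [h0_coeq F p] }

theorem master (p : F ⟶ 𝟭 DegComputad) (q : ∀ A, F.obj A ⟶ W)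
    (hlim : ∀ A, Nonempty (IsLimit (BinaryFan.mk (p.app A) (q A)))) :
    ¬ Nonempty (PreservesColimitsOfShape WalkingParallelPair F) := by
  rintro ⟨hpres⟩
  -- two distinct 3-cells of `F.obj W`
  obtain ⟨hW⟩ := hlim W
  obtain ⟨l1, hl1p, hl1q⟩ := BinaryFan.IsLimit.lift' hW (𝟙 W) (𝟙 W)
  obtain ⟨l2, hl2p, hl2q⟩ := BinaryFan.IsLimit.lift' hW (𝟙 W) sig
  set e1 : (F.obj W).C3 := l1.f3 () with he1
  set e2 : (F.obj W).C3 := l2.f3 () with he2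
  have hl1p' : l1 ≫ p.app W = 𝟙 W := hl1p
  have hl1q' : l1 ≫ q W = 𝟙 W := hl1q
  have hl2p' : l2 ≫ p.app W = 𝟙 W := hl2p
  have hl2q' : l2 ≫ q W = sig := hl2q
  have hne : e1 ≠ e2 := by
    intro hEq
    have h1 : (F.obj W).src e1 = {l1.f2 0, l1.f2 1} := by
      have hsc : (F.obj W).src (l1.f3 ())
          = Multiset.map l1.f2 ({0, 1} : Multiset (Fin 3)) := l1.src_comm ()
      rw [he1, hsc]; simp [Multiset.insert_eq_cons]
    have h2 : (F.obj W).src e2 = {l2.f2 0, l2.f2 1} := by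
      have hsc : (F.obj W).src (l2.f3 ())
          = Multiset.map l2.f2 ({0, 1} : Multiset (Fin 3)) := l2.src_comm ()
      rw [he2, hsc]; simp [Multiset.insert_eq_cons]
    have k1 : ∀ i, (p.app W).f2 (l1.f2 i) = i := fun i =>
      congrFun (congrArg DegComputad.Hom.f2 hl1p') i
    have k2 : ∀ i, (q W).f2 (l1.f2 i) = i := fun i =>
      congrFun (congrArg DegComputad.Hom.f2 hl1q') i
    have k3 : ∀ i, (p.app W).f2 (l2.f2 i) = i := fun i =>
      congrFun (congrArg DegComputad.Hom.f2 hl2p') i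
    have k4 : ∀ i, (q W).f2 (l2.f2 i) = sig.f2 i := fun i =>
      congrFun (congrArg DegComputad.Hom.f2 hl2q') i
    have hmap : Multiset.map (fun c => (((p.app W).f2 c, (q W).f2 c) : Fin 3 × Fin 3))
          ((F.obj W).src e1)
        = Multiset.map (fun c => (((p.app W).f2 c, (q W).f2 c) : Fin 3 × Fin 3))
          ((F.obj W).src e2) := by
      rw [hEq]
    rw [h1, h2] at hmap
    simp only [Multiset.insert_eq_cons, Multiset.map_cons, Multiset.map_singleton,
      k1, k2, k3, k4] at hmap
    rw [show sig.f2 0 = 1 from rfl, show sig.f2 1 = 0 from rfl] at hmap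
    exact absurd hmap (by decide)
  -- preservation gives a factorization through the concrete cocone
  have hcolim : IsColimit (F.mapCocone (Cofork.ofπ pim coeq_cond)) :=
    isColimitOfPreserves F coforkColim
  set d : F.obj Qc ⟶ Cq F := hcolim.desc (cc F p) with hd
  have hfac : F.map pim ≫ d = h0 F := by
    have h := hcolim.fac (cc F p) WalkingParallelPair.one
    simp at h; exact h
  have a1 : d.f3 ((F.map pim).f3 e1) = e1 :=
    congrFun (congrArg DegComputad.Hom.f3 hfac) e1
  have a2 : d.f3 ((F.map pim).f3 e2) = e2 :=
    congrFun (congrArg DegComputad.Hom.f3 hfac) e2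
  have hQ : (F.map pim).f3 e1 = (F.map pim).f3 e2 :=
    C3_sub (p.app Qc) (q Qc) (hlim Qc).some _ _
  exact hne (a1.symm.trans (by rw [hQ]; exact a2))

end Master

section CC

variable [CartesianMonoidalCategory DegComputad]

def pnat : MonoidalCategory.tensorLeft W ⟶ 𝟭 DegComputad where
  app A := CartesianMonoidalCategory.snd W A
  naturality A A' f := by simp

def qfam (A : DegComputad) : (MonoidalCategory.tensorLeft W).obj A ⟶ W :=
  CartesianMonoidalCategory.fst W A

def hlimCC (A : DegComputad) : IsLimit (BinaryFan.mk (pnat.app A) (qfam A)) :=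
  BinaryFan.isLimitMk (fun s => CartesianMonoidalCategory.lift s.snd s.fst)
    (fun s => CartesianMonoidalCategory.lift_snd _ _)
    (fun s => CartesianMonoidalCategory.lift_fst _ _)
    (fun s m h1 h2 => CartesianMonoidalCategory.hom_ext _ _
      (by exact h2.trans (CartesianMonoidalCategory.lift_fst _ _).symm)
      (by exact h1.trans (CartesianMonoidalCategory.lift_snd _ _).symm))

end CC

end Stmt9Aux

/-- There is a 2-degenerate 3-computad `B` such that any functor `− × B` (i.e. any
functor equipped with natural projections making each value a product with `B`) fails
to preserve coequalizers; consequently no such functor has a right adjoint, and the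
category of 2-degenerate 3-computads is not cartesian closed. -/
theorem stmt9 :
    ∃ B : DegComputad,
      (∀ (F : DegComputad ⥤ DegComputad) (p : F ⟶ 𝟭 DegComputad)
          (q : ∀ A, F.obj A ⟶ B),
        (∀ A, Nonempty (IsLimit (BinaryFan.mk (p.app A) (q A)))) →
          ¬ Nonempty (PreservesColimitsOfShape WalkingParallelPair F) ∧
          ∀ G : DegComputad ⥤ DegComputad, ¬ Nonempty (F ⊣ G)) ∧
      ∀ (hfp : CartesianMonoidalCategory DegComputad),
        IsEmpty (@MonoidalClosed DegComputad _ hfp.toMonoidalCategory) := by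
  refine ⟨Stmt9Aux.W, fun F p q hlim =>
    ⟨Stmt9Aux.master F p q hlim, fun G hadj => ?_⟩, fun hfp => ?_⟩
  · obtain ⟨adj⟩ := hadj
    letI := adj.leftAdjoint_preservesColimits
    exact Stmt9Aux.master F p q hlim ⟨inferInstance⟩
  · refine ⟨fun hcc => ?_⟩
    letI := hfp
    letI : MonoidalClosed DegComputad := hcc
    exact Stmt9Aux.master (MonoidalCategory.tensorLeft Stmt9Aux.W)
      Stmt9Aux.pnat Stmt9Aux.qfam (fun A => ⟨Stmt9Aux.hlimCC A⟩)
      (by letI := (ihom.adjunction Stmt9Aux.W).leftAdjoint_preservesColimits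
          exact ⟨inferInstance⟩)
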